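/- Let P be a finite pure poset (all maximal chains of P have the same length). Then the map depth : \hat{P} \to \mathbb{N}, where depth(x) is the rank of the subposet {y \in \hat{P} : y \ge x}, belongs to T(P) and is the unique minimal element of T(P); that is, for every v \in T(P) one has v \ge depth in the partial order of T(P), i.e. v(p) \ge depth(p) for all p and v - depth is order-reversing. -/

import Mathlib

open Classical

/-- `Hat P` is the poset `P` with a new least element `-∞ = ⊥` and a new
greatest element `∞ = ⊤` adjoined. -/
abbrev Hat (P : Type*) := WithBot (WithTop P)

/-- The canonical inclusion of `P` into `Hat P`. -/
def toHat {P : Type*} (x : P) : Hat P := ((x : WithTop P) : WithBot (WithTop P))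

/-- The rank of a poset: the maximal length (number of covering steps) of a
chain, encoded as the maximal `n` admitting a strictly increasing sequence of
`n + 1` elements. -/
noncomputable def rankN (Q : Type*) [Preorder Q] : ℕ :=
  sSup {n : ℕ | ∃ f : Fin (n + 1) → Q, StrictMono f}

/-- The height of `x` in a poset `Q`: the rank of the subposet `{y | y ≤ x}`. -/
noncomputable def heightN {Q : Type*} [Preorder Q] (x : Q) : ℕ :=
  sSup {n : ℕ | ∃ f : Fin (n + 1) → Q, StrictMono f ∧ ∀ i, f i ≤ x}

/-- The depth of `x` in a poset `Q`: the rank of the subposet `{y | x ≤ y}`. -/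
noncomputable def depthN {Q : Type*} [Preorder Q] (x : Q) : ℕ :=
  sSup {n : ℕ | ∃ f : Fin (n + 1) → Q, StrictMono f ∧ ∀ i, x ≤ f i}

/-- `v` belongs to `S(P)`: `v : Hat P → ℕ` is order-reversing with `v ∞ = 0`. -/
def memS (P : Type*) [PartialOrder P] (v : Hat P → ℕ) : Prop :=
  v ⊤ = 0 ∧ ∀ p q : Hat P, p ≤ q → v q ≤ v p

/-- `v` belongs to `T(P)`: `v : Hat P → ℕ` is strictly order-reversing with
`v ∞ = 0`. -/
def memT (P : Type*) [PartialOrder P] (v : Hat P → ℕ) : Prop :=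
  v ⊤ = 0 ∧ ∀ p q : Hat P, p < q → v q < v p

/-- The partial order of `T(P)`: `v ≥ w` iff `v` dominates `w` pointwise and the
pointwise difference `v - w` is order-reversing. -/
def Tge (P : Type*) [PartialOrder P] (v w : Hat P → ℕ) : Prop :=
  (∀ p : Hat P, w p ≤ v p) ∧ ∀ p q : Hat P, p ≤ q → v q - w q ≤ v p - w p

/-- `v` is a minimal element of the poset `T(P)`. -/
def IsMinT (P : Type*) [PartialOrder P] (v : Hat P → ℕ) : Prop :=
  memT P v ∧ ∀ w : Hat P → ℕ, memT P w → Tge P v w → w = v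

/-- A poset is pure if all its maximal chains have the same length, equivalently
the same cardinality. -/
def IsPure (P : Type*) [PartialOrder P] : Prop :=
  ∀ C D : Set P, IsMaxChain (· ≤ ·) C → IsMaxChain (· ≤ ·) D → C.ncard = D.ncard

/-! ### Auxiliary material -/

noncomputable instance hatFintypeBot {α : Type*} [Fintype α] : Fintype (WithBot α) :=
  inferInstanceAs (Fintype (Option α))
noncomputable instance hatFintypeTop {α : Type*} [Fintype α] : Fintype (WithTop α) :=
  inferInstanceAs (Fintype (Option α))

section Generic

variable {Q : Type*} [PartialOrder Q]

/-- ℕ-indexed covering (saturated) chain of length `n`. -/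
def CovC (f : ℕ → Q) (n : ℕ) : Prop := ∀ i, i < n → f i ⋖ f (i + 1)

lemma CovC.lt_of_lt {f : ℕ → Q} {n : ℕ} (hf : CovC f n) :
    ∀ i j, i < j → j ≤ n → f i < f j := by
  intro i j hij hjn
  induction j with
  | zero => omega
  | succ k ih =>
    rcases Nat.lt_or_ge i k with h | h
    · exact (ih h (by omega)).trans (hf k (by omega)).lt
    · have hik : i = k := by omega
      subst hik
      exact (hf i (by omega)).lt

lemma CovC.le_of_le {f : ℕ → Q} {n : ℕ} (hf : CovC f n) :
    ∀ i j, i ≤ j → j ≤ n → f i ≤ f j := by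
  intro i j hij hjn
  rcases eq_or_lt_of_le hij with rfl | h
  · exact le_rfl
  · exact (hf.lt_of_lt i j h hjn).le

/-- Prepending a new bottom element to a covering chain. -/
lemma CovC.cons {f : ℕ → Q} {n : ℕ} {a : Q} (hf : CovC f n) (ha : a ⋖ f 0) :
    CovC (fun i => if i = 0 then a else f (i - 1)) (n + 1) := by
  intro i hi
  rcases Nat.eq_zero_or_pos i with rfl | hpos
  · simpa using ha
  · have h1 : i ≠ 0 := by omega
    have h2 : i + 1 ≠ 0 := by omega
    simp only [if_neg h1, if_neg h2]
    have h3 : i + 1 - 1 = (i - 1) + 1 := by omega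
    rw [h3]
    exact hf (i - 1) (by omega)

/-- Concatenation of covering chains. -/
lemma CovC.append {f g : ℕ → Q} {m n : ℕ} (hf : CovC f m) (hg : CovC g n) (hfg : f m = g 0) :
    CovC (fun i => if i ≤ m then f i else g (i - m)) (m + n) := by
  intro i hi
  rcases Nat.lt_or_ge i m with h | h
  · simp only [if_pos (by omega : i ≤ m), if_pos (by omega : i + 1 ≤ m)]
    exact hf i h
  · rcases eq_or_lt_of_le h with heq | h'
    · subst heq
      have hn : 0 < n := by omega
      simp only [if_pos (le_refl m), if_neg (by omega : ¬ m + 1 ≤ m)]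
      have h4 : m + 1 - m = 1 := by omega
      rw [h4, hfg]
      exact hg 0 hn
    · simp only [if_neg (by omega : ¬ i ≤ m), if_neg (by omega : ¬ i + 1 ≤ m)]
      have : i + 1 - m = (i - m) + 1 := by omega
      rw [this]
      exact hg (i - m) (by omega)

/-- Fill-in: an element comparable with every member of a saturated chain between
its endpoints belongs to the chain. -/
lemma CovC.eq_of_comparable {f : ℕ → Q} {n : ℕ} (hf : CovC f n) {x : Q}
    (hcomp : ∀ i, i ≤ n → f i ≤ x ∨ x ≤ f i) (h0 : f 0 ≤ x) (hn : x ≤ f n) :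
    ∃ i, i ≤ n ∧ x = f i := by
  classical
  have hile : Nat.findGreatest (fun j => f j ≤ x) n ≤ n := Nat.findGreatest_le n
  have hfi : f (Nat.findGreatest (fun j => f j ≤ x) n) ≤ x := by
    simpa using Nat.findGreatest_spec (P := fun j => f j ≤ x) (Nat.zero_le n) h0
  set i := Nat.findGreatest (fun j => f j ≤ x) n with hidef
  by_cases hin : i = n
  · exact ⟨i, hile, le_antisymm (hin ▸ hn) hfi⟩
  · have hnot : ¬ f (i + 1) ≤ x := by
      have h5 : Nat.findGreatest (fun j => f j ≤ x) n < i + 1 := by omega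
      have h6 : i + 1 ≤ n := by omega
      simpa using Nat.findGreatest_is_greatest h5 h6
    have hxle : x ≤ f (i + 1) := (hcomp (i + 1) (by omega)).resolve_left hnot
    rcases eq_or_lt_of_le hfi with heq | hlt
    · exact ⟨i, by omega, heq.symm⟩
    · have hno : ¬ x < f (i + 1) := (hf i (by omega)).2 hlt
      exact ⟨i + 1, by omega, hxle.lt_or_eq.resolve_left hno⟩

/-- The set over which `depthN` takes a supremum. -/
def DSet (x : Q) : Set ℕ := {n : ℕ | ∃ f : Fin (n + 1) → Q, StrictMono f ∧ ∀ i, x ≤ f i}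

lemma depthN_eq_sSup (x : Q) : depthN x = sSup (DSet x) := rfl

lemma DSet_nonempty (x : Q) : (DSet x).Nonempty :=
  ⟨0, fun _ => x, by
    intro i j h
    have h1 := i.isLt
    have h2 := j.isLt
    have h3 := Fin.lt_def.mp h
    omega, fun _ => le_rfl⟩

lemma mem_DSet_iff {x : Q} {n : ℕ} :
    n ∈ DSet x ↔ ∃ f : ℕ → Q, (∀ i j, i < j → j ≤ n → f i < f j) ∧ ∀ i, i ≤ n → x ≤ f i := by
  constructor
  · rintro ⟨f, hf, hx⟩
    refine ⟨fun k => f ⟨min k n, by omega⟩, ?_, ?_⟩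
    · intro i j hij hjn
      apply hf
      simp only [Fin.mk_lt_mk]
      omega
    · intro i _
      exact hx _
  · rintro ⟨f, hf, hx⟩
    refine ⟨fun i => f i.val, ?_, fun i => hx _ (by omega)⟩
    intro i j hij
    exact hf i.val j.val hij (by omega)

variable [Fintype Q]

lemma DSet_bddAbove (x : Q) : BddAbove (DSet x) := by
  refine ⟨Fintype.card Q, fun n hn => ?_⟩
  obtain ⟨f, hf, -⟩ := hn
  have h := Fintype.card_le_of_injective f hf.injective
  simp only [Fintype.card_fin] at h
  omega

lemma le_depthN {x : Q} {n : ℕ} (hn : n ∈ DSet x) : n ≤ depthN x :=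
  le_csSup (DSet_bddAbove x) hn

lemma depthN_mem (x : Q) : depthN x ∈ DSet x :=
  Nat.sSup_mem (DSet_nonempty x) (DSet_bddAbove x)

lemma depthN_lt_depthN {x y : Q} (h : x < y) : depthN y < depthN x := by
  obtain ⟨f, hf, hxf⟩ := mem_DSet_iff.1 (depthN_mem y)
  have hmem : depthN y + 1 ∈ DSet x := by
    rw [mem_DSet_iff]
    refine ⟨fun i => if i = 0 then x else f (i - 1), ?_, ?_⟩
    · intro i j hij hjn
      rcases Nat.eq_zero_or_pos i with rfl | hi
      · simp only [if_pos rfl, if_neg (by omega : j ≠ 0)]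
        exact lt_of_lt_of_le h (hxf (j - 1) (by omega))
      · simp only [if_neg (by omega : i ≠ 0), if_neg (by omega : j ≠ 0)]
        exact hf _ _ (by omega) (by omega)
    · intro i hi
      rcases Nat.eq_zero_or_pos i with rfl | hi'
      · simp
      · simp only [if_neg (by omega : i ≠ 0)]
        exact h.le.trans (hxf (i - 1) (by omega))
  have := le_depthN hmem
  omega

lemma depthN_le_depthN {x y : Q} (h : x ≤ y) : depthN y ≤ depthN x := by
  rcases eq_or_lt_of_le h with rfl | h
  · exact le_rfl
  · exact (depthN_lt_depthN h).le

lemma exists_covBy_le' {a b : Q} (h : a < b) : ∃ c, a ⋖ c ∧ c ≤ b := by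
  obtain ⟨c, hc, hmin⟩ := Set.Finite.exists_minimalFor id {x : Q | a < x ∧ x ≤ b}
    (Set.toFinite _) ⟨b, h, le_rfl⟩
  refine ⟨c, ⟨hc.1, fun z haz hzc => ?_⟩, hc.2⟩
  exact absurd (hmin ⟨haz, hzc.le.trans hc.2⟩ hzc.le) (not_le_of_gt hzc)

lemma exists_covC_aux : ∀ (k : ℕ) {a b : Q}, depthN a - depthN b ≤ k → a ≤ b →
    ∃ n f, CovC f n ∧ f 0 = a ∧ f n = b := by
  intro k
  induction k with
  | zero =>
    intro a b hk hab
    rcases eq_or_lt_of_le hab with rfl | h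
    · exact ⟨0, fun _ => a, fun i hi => absurd hi (by omega), rfl, rfl⟩
    · have h1 := depthN_lt_depthN h
      have h2 := depthN_le_depthN hab
      omega
  | succ k ih =>
    intro a b hk hab
    rcases eq_or_lt_of_le hab with rfl | h
    · exact ⟨0, fun _ => a, fun i hi => absurd hi (by omega), rfl, rfl⟩
    · obtain ⟨c, hac, hcb⟩ := exists_covBy_le' h
      have h1 : depthN c < depthN a := depthN_lt_depthN hac.lt
      have h2 : depthN b ≤ depthN c := depthN_le_depthN hcb
      obtain ⟨n, f, hf, hf0, hfn⟩ := ih (a := c) (b := b) (by omega) hcb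
      refine ⟨n + 1, _, hf.cons (hf0 ▸ hac), by simp, ?_⟩
      simp only [if_neg (by omega : n + 1 ≠ 0)]
      simpa using hfn

lemma exists_covC {a b : Q} (hab : a ≤ b) : ∃ n f, CovC f n ∧ f 0 = a ∧ f n = b :=
  exists_covC_aux _ le_rfl hab

end Generic

section HatLemmas

variable {P : Type*} [PartialOrder P]

lemma toHat_injective : Function.Injective (toHat (P := P)) := by
  intro a b h
  simpa [toHat] using h

lemma toHat_le_iff {a b : P} : toHat a ≤ toHat b ↔ a ≤ b := by
  simp [toHat]

lemma toHat_ne_bot (a : P) : toHat a ≠ ⊥ := by simp [toHat]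

lemma toHat_ne_top (a : P) : toHat a ≠ ⊤ := by simp [toHat]

lemma hat_bot_ne_top : (⊥ : Hat P) ≠ ⊤ := by simp

lemma exists_toHat {y : Hat P} (h1 : y ≠ ⊥) (h2 : y ≠ ⊤) : ∃ x, y = toHat x := by
  induction y using WithBot.recBotCoe with
  | bot => exact absurd rfl h1
  | coe z =>
    induction z using WithTop.recTopCoe with
    | top => exact absurd (by rfl : ((⊤ : WithTop P) : WithBot (WithTop P)) = ⊤) h2
    | coe x => exact ⟨x, rfl⟩

/-- The middle part of a saturated chain from `⊥` to `⊤` in `Hat P`. -/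
lemma middle_maxChain {f : ℕ → Hat P} {n : ℕ} (hf : CovC f n) (h0 : f 0 = ⊥) (hn : f n = ⊤) :
    IsMaxChain (· ≤ ·) {x : P | toHat x ∈ f '' Set.Iic n} ∧
      {x : P | toHat x ∈ f '' Set.Iic n}.ncard = n - 1 ∧ 1 ≤ n := by
  set M : Set P := {x : P | toHat x ∈ f '' Set.Iic n} with hM
  have hn1 : 1 ≤ n := by
    rcases Nat.eq_zero_or_pos n with rfl | h
    · exact absurd (h0.symm.trans hn) hat_bot_ne_top
    · exact h
  have hinj : Set.InjOn f (Set.Iic n) := by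
    intro i hi j hj hij
    by_contra hne
    rcases Nat.lt_or_ge i j with h | h
    · exact (hf.lt_of_lt i j h hj).ne hij
    · exact (hf.lt_of_lt j i (by omega) hi).ne hij.symm
  constructor
  · constructor
    · -- IsChain
      rintro x hx y hy hxy
      obtain ⟨i, hi, hfi⟩ := hx
      obtain ⟨j, hj, hfj⟩ := hy
      have hij : i ≠ j := by
        rintro rfl
        exact hxy (toHat_injective (hfi.symm.trans hfj))
      rcases Nat.lt_or_ge i j with h | h
      · exact Or.inl (toHat_le_iff.1 (hfi ▸ hfj ▸ (hf.lt_of_lt i j h hj).le))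
      · exact Or.inr (toHat_le_iff.1 (hfj ▸ hfi ▸ (hf.lt_of_lt j i (by omega) hi).le))
    · -- maximality
      intro C' hC' hsub
      refine Set.Subset.antisymm hsub ?_
      intro x hx
      have hcomp : ∀ i, i ≤ n → f i ≤ toHat x ∨ toHat x ≤ f i := by
        intro i hi
        by_cases hib : f i = ⊥
        · exact Or.inl (hib ▸ bot_le)
        by_cases hit : f i = ⊤
        · exact Or.inr (hit ▸ le_top)
        obtain ⟨y, hy⟩ := exists_toHat hib hit
        have hyM : y ∈ M := ⟨i, hi, hy⟩
        by_cases hxy : x = y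
        · subst hxy
          exact Or.inr (le_of_eq hy.symm)
        · rcases hC' (hsub hyM) hx (Ne.symm hxy) with h | h
          · exact Or.inl (hy ▸ toHat_le_iff.2 h)
          · exact Or.inr (hy ▸ toHat_le_iff.2 h)
      obtain ⟨i, hi, hfi⟩ := hf.eq_of_comparable hcomp (h0 ▸ bot_le) (hn ▸ le_top)
      exact ⟨i, hi, hfi.symm⟩
  · refine ⟨?_, hn1⟩
    have himg : toHat '' M = f '' Set.Iic n \ {⊥, ⊤} := by
      ext y
      constructor
      · rintro ⟨x, hx, rfl⟩
        refine ⟨hx, ?_⟩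
        simp [toHat_ne_bot, toHat_ne_top]
      · rintro ⟨hy, hne⟩
        simp only [Set.mem_insert_iff, Set.mem_singleton_iff, not_or] at hne
        obtain ⟨x, rfl⟩ := exists_toHat hne.1 hne.2
        exact ⟨x, hy, rfl⟩
    have h1 : M.ncard = (toHat '' M).ncard :=
      (Set.ncard_image_of_injective _ toHat_injective).symm
    have hsubpair : ({⊥, ⊤} : Set (Hat P)) ⊆ f '' Set.Iic n := by
      rintro y hy
      rcases hy with rfl | rfl
      · exact ⟨0, by simp, h0⟩
      · exact ⟨n, by simp, hn⟩
    have hfin : (f '' Set.Iic n).Finite := (Set.finite_Iic n).image f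
    have h2 : (f '' Set.Iic n \ {⊥, ⊤}).ncard = (f '' Set.Iic n).ncard - 2 := by
      rw [Set.ncard_diff hsubpair, Set.ncard_pair hat_bot_ne_top]
    have h3 : (f '' Set.Iic n).ncard = n + 1 := by
      rw [Set.ncard_image_of_injOn hinj, ← Finset.coe_Iic, Set.ncard_coe_finset, Nat.card_Iic]
    rw [h1, himg, h2, h3]
    omega

end HatLemmas

section HatMain

variable {P : Type*} [Fintype P] [PartialOrder P] (hP : IsPure P)
include hP

lemma length_eq_of_covC_bot_top {f g : ℕ → Hat P} {m n : ℕ}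
    (hf : CovC f m) (hf0 : f 0 = ⊥) (hfm : f m = ⊤)
    (hg : CovC g n) (hg0 : g 0 = ⊥) (hgn : g n = ⊤) : m = n := by
  obtain ⟨hM1, hc1, h1⟩ := middle_maxChain hf hf0 hfm
  obtain ⟨hM2, hc2, h2⟩ := middle_maxChain hg hg0 hgn
  have := hP _ _ hM1 hM2
  omega

lemma satLen_unique {a : Hat P} {m n : ℕ} {f g : ℕ → Hat P}
    (hf : CovC f m) (hf0 : f 0 = a) (hfm : f m = ⊤)
    (hg : CovC g n) (hg0 : g 0 = a) (hgn : g n = ⊤) : m = n := by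
  obtain ⟨k, e, he, he0, hek⟩ := exists_covC (bot_le : (⊥ : Hat P) ≤ a)
  have hcat1 := he.append hf (by rw [hek, hf0])
  have hcat2 := he.append hg (by rw [hek, hg0])
  have hv1 : (fun i => if i ≤ k then e i else f (i - k)) 0 = ⊥ := by simpa using he0
  have hv2 : (fun i => if i ≤ k then e i else f (i - k)) (k + m) = ⊤ := by
    rcases Nat.eq_zero_or_pos m with rfl | hm
    · simpa [hek] using hf0.symm.trans hfm
    · simp only [if_neg (by omega : ¬ k + m ≤ k)]
      simpa using hfm
  have hw1 : (fun i => if i ≤ k then e i else g (i - k)) 0 = ⊥ := by simpa using he0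
  have hw2 : (fun i => if i ≤ k then e i else g (i - k)) (k + n) = ⊤ := by
    rcases Nat.eq_zero_or_pos n with rfl | hm
    · simpa [hek] using hg0.symm.trans hgn
    · simp only [if_neg (by omega : ¬ k + n ≤ k)]
      simpa using hgn
  have := length_eq_of_covC_bot_top hP hcat1 hv1 hv2 hcat2 hw1 hw2
  omega

lemma depthN_zero_case' {a : Hat P} {n : ℕ} {f : ℕ → Hat P} (ha : depthN a = 0)
    (hf : CovC f n) (h0 : f 0 = a) (hn : f n = ⊤) : depthN a = n := by
  have hatop : a = ⊤ := by
    by_contra hne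
    have hlt : a < ⊤ := lt_of_le_of_ne le_top hne
    have := depthN_lt_depthN hlt
    omega
  rcases Nat.eq_zero_or_pos n with rfl | hpos
  · omega
  · exfalso
    have hcon := hf.lt_of_lt 0 n hpos le_rfl
    rw [h0, hn, hatop] at hcon
    exact lt_irrefl _ hcon

lemma depthN_eq_covC_len :
    ∀ (N : ℕ) {a : Hat P} {n : ℕ} {f : ℕ → Hat P}, depthN a ≤ N → CovC f n → f 0 = a → f n = ⊤ →
      depthN a = n := by
  intro N
  induction N with
  | zero =>
    intro a n f hN hf h0 hn
    exact depthN_zero_case' hP (by omega) hf h0 hn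
  | succ N ih =>
    intro a n f hN hf h0 hn
    by_cases hk0 : depthN a = 0
    · exact depthN_zero_case' hP hk0 hf h0 hn
    have hk1 : 1 ≤ depthN a := by omega
    obtain ⟨g0, hg0s, hg0a⟩ := mem_DSet_iff.1 (depthN_mem a)
    set g : ℕ → Hat P := fun i => if i = 0 then a else g0 i with hgdef
    have hg0' : g 0 = a := by simp [hgdef]
    have hgs : ∀ i j, i < j → j ≤ depthN a → g i < g j := by
      intro i j hij hjk
      rcases Nat.eq_zero_or_pos i with rfl | hi
      · simp only [hgdef, if_pos rfl, if_neg (by omega : j ≠ 0)]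
        exact lt_of_le_of_lt (hg0a 0 (by omega)) (hg0s 0 j hij hjk)
      · simp only [hgdef, if_neg (by omega : i ≠ 0), if_neg (by omega : j ≠ 0)]
        exact hg0s i j hij hjk
    have hga : ∀ i, i ≤ depthN a → a ≤ g i := by
      intro i hi
      rcases Nat.eq_zero_or_pos i with rfl | hi'
      · exact le_of_eq hg0'.symm
      · simp only [hgdef, if_neg (by omega : i ≠ 0)]
        exact hg0a i hi
    have h01 : a < g 1 := by
      have := hgs 0 1 (by omega) (by omega)
      rwa [hg0'] at this
    obtain ⟨c, hac, hc1⟩ := exists_covBy_le' h01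
    have hceq : c = g 1 := by
      rcases eq_or_lt_of_le hc1 with h | h
      · exact h
      · exfalso
        have hmem : depthN a ∈ DSet c := by
          rw [mem_DSet_iff]
          refine ⟨fun i => if i = 0 then c else g i, ?_, ?_⟩
          · intro i j hij hjk
            rcases Nat.eq_zero_or_pos i with rfl | hi
            · simp only [if_pos rfl, if_neg (by omega : j ≠ 0)]
              rcases eq_or_lt_of_le (by omega : 1 ≤ j) with rfl | hj1
              · exact h
              · exact h.trans (hgs 1 j hj1 hjk)
            · simp only [if_neg (by omega : i ≠ 0), if_neg (by omega : j ≠ 0)]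
              exact hgs i j hij hjk
          · intro i hi
            rcases Nat.eq_zero_or_pos i with rfl | hi'
            · simp
            · simp only [if_neg (by omega : i ≠ 0)]
              rcases eq_or_lt_of_le (by omega : 1 ≤ i) with rfl | hi1
              · exact h.le
              · exact h.le.trans (hgs 1 i hi1 hi).le
        have h6 := le_depthN hmem
        have h7 := depthN_lt_depthN hac.lt
        omega
    have hacov : a ⋖ g 1 := hceq ▸ hac
    have hmem2 : depthN a - 1 ∈ DSet (g 1) := by
      rw [mem_DSet_iff]
      refine ⟨fun i => g (i + 1), ?_, ?_⟩
      · intro i j hij hjk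
        exact hgs (i + 1) (j + 1) (by omega) (by omega)
      · intro i hi
        rcases Nat.eq_zero_or_pos i with rfl | hi'
        · exact le_rfl
        · exact (hgs 1 (i + 1) (by omega) (by omega)).le
    have h5 := le_depthN hmem2
    have hdown : depthN (g 1) < depthN a := depthN_lt_depthN h01
    obtain ⟨m, u, hu, hu0, hum⟩ := exists_covC (le_top : g 1 ≤ ⊤)
    have hdg : depthN (g 1) = m := ih (by omega) hu hu0 hum
    have hcons := hu.cons (hu0 ▸ hacov : a ⋖ u 0)
    have hc0 : (fun i => if i = 0 then a else u (i - 1)) 0 = a := by simp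
    have hcm : (fun i => if i = 0 then a else u (i - 1)) (m + 1) = ⊤ := by
      simp only [if_neg (by omega : m + 1 ≠ 0)]
      simpa using hum
    have hfinal := satLen_unique hP hf h0 hn hcons hc0 hcm
    omega

omit hP in
lemma depthN_top_eq_zero : depthN (⊤ : Hat P) = 0 := by
  by_contra h0
  obtain ⟨f, hfs, hfp⟩ := mem_DSet_iff.1 (depthN_mem (⊤ : Hat P))
  have h1 : f 0 < f (depthN (⊤ : Hat P)) := hfs 0 _ (by omega) le_rfl
  have h2 : f (depthN (⊤ : Hat P)) ≤ f 0 := le_trans le_top (hfp 0 (by omega))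
  exact absurd h2 (not_le_of_gt h1)

omit hP in
lemma v_step {v : Hat P → ℕ} (hv : memT P v) {f : ℕ → Hat P} {n : ℕ}
    (hlt : ∀ i, i < n → f i < f (i + 1)) : ∀ i, i ≤ n → v (f i) + i ≤ v (f 0) := by
  intro i
  induction i with
  | zero => intro _; omega
  | succ i ihi =>
    intro h
    have h1 := hv.2 _ _ (hlt i (by omega))
    have h2 := ihi (by omega)
    omega

omit hP in
lemma depthN_le_v {v : Hat P → ℕ} (hv : memT P v) (p : Hat P) : depthN p ≤ v p := by
  obtain ⟨f, hfs, hfp⟩ := mem_DSet_iff.1 (depthN_mem p)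
  have key := v_step hv (n := depthN p) (fun i hi => hfs i (i + 1) (by omega) (by omega)) _ le_rfl
  have h2 : v (f 0) ≤ v p := by
    rcases eq_or_lt_of_le (hfp 0 (by omega)) with h | h
    · exact le_of_eq (congrArg v h.symm)
    · exact (hv.2 _ _ h).le
  omega

end HatMain

/-- If `P` is a finite pure poset then the depth function belongs to `T(P)` and
is the unique minimal element of `T(P)`: every `v ∈ T(P)` satisfies `v ≥ depth`
in the partial order of `T(P)`. -/
theorem depth_isUniqueMin_of_isPure (P : Type*) [Fintype P] [PartialOrder P]
    (hP : IsPure P) :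
    memT P (fun x => depthN x) ∧
      ∀ v : Hat P → ℕ, memT P v → Tge P v (fun x => depthN x) := by
  refine ⟨⟨?_, ?_⟩, ?_⟩
  · exact depthN_top_eq_zero
  · intro p q hpq
    exact depthN_lt_depthN hpq
  · intro v hv
    refine ⟨fun p => depthN_le_v hv p, ?_⟩
    intro p q hpq
    show v q - depthN q ≤ v p - depthN p
    rcases eq_or_lt_of_le hpq with rfl | hlt
    · exact le_rfl
    obtain ⟨m, w, hw, hw0, hwm⟩ := exists_covC hlt.le
    obtain ⟨l, u, hu, hu0, hul⟩ := exists_covC (le_top : q ≤ ⊤)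
    have hdq : depthN q = l := depthN_eq_covC_len hP (depthN q) le_rfl hu hu0 hul
    have hcat := hw.append hu (hwm.trans hu0.symm)
    have hcat0 : (fun i => if i ≤ m then w i else u (i - m)) 0 = p := by simpa using hw0
    have hcatml : (fun i => if i ≤ m then w i else u (i - m)) (m + l) = ⊤ := by
      rcases Nat.eq_zero_or_pos l with rfl | hl
      · simpa [hwm, hu0] using hul
      · simp only [if_neg (by omega : ¬ m + l ≤ m)]
        simpa using hul
    have hdp : depthN p = m + l := depthN_eq_covC_len hP (depthN p) le_rfl hcat hcat0 hcatml
    have hvdec := v_step hv (n := m) (fun i hi => (hw i hi).lt) m le_rfl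
    rw [hw0, hwm] at hvdec
    have h1 := depthN_le_v hv p
    have h2 := depthN_le_v hv q
    omega
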